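/- arXiv:2412.04932 — 2 statements merged into one kernel-verified Lean document; each statement's English description precedes it below -/
import Mathlib

section
/- Let Γ be a preGarside trickle graph with V(Γ) finite. Then the trickle group Tr(Γ) is torsion-free. -/
open scoped Classical

universe u

namespace SimpleGraph

/-- `y` belongs to the star of `x` in `G` (i.e. `y = x` or `y` is a neighbour of `x`). -/
def InStar {V : Type u} (G : SimpleGraph V) (x y : V) : Prop := y = x ∨ G.Adj x y

end SimpleGraph

/-- A **trickle graph**: a simplicial graph together with a partial order on the vertices,
a vertex labeling `mu` with values in `ℕ≥2 ∪ {∞}`, and, for every vertex `x`, an automorphism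
`phi x` of the star of `x` (encoded as a permutation of the whole vertex set fixing every
vertex outside of the star of `x`), subject to conditions (a)–(g) of Bellingeri–Chemin–Paris. -/
structure TrickleGraph (V : Type u) [PartialOrder V] where
  /-- the underlying simplicial graph -/
  graph : SimpleGraph V
  /-- the vertex labeling, with `⊤` playing the role of `∞` -/
  mu : V → ℕ∞
  /-- the automorphism of the star of each vertex, extended by the identity -/
  phi : V → Equiv.Perm V
  two_le_mu : ∀ x : V, 2 ≤ mu x
  /-- condition (a) -/
  adj_of_lt : ∀ x y : V, x < y → graph.Adj x y
  /-- `phi x` is supported on the star of `x` -/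
  phi_apply_of_not_inStar : ∀ x y : V, ¬ graph.InStar x y → phi x y = y
  /-- `phi x` maps the star of `x` to itself -/
  inStar_phi : ∀ x y : V, graph.InStar x y → graph.InStar x (phi x y)
  /-- `phi x` is a graph automorphism of the (full subgraph spanned by the) star of `x` -/
  adj_phi_iff : ∀ x y z : V, graph.InStar x y → graph.InStar x z →
      (graph.Adj (phi x y) (phi x z) ↔ graph.Adj y z)
  /-- condition (b) -/
  adj_incomp : ∀ x y z : V, graph.Adj x y → ¬ x ≤ y → ¬ y ≤ x → z ≤ y →
      graph.Adj x z ∧ ¬ x ≤ z ∧ ¬ z ≤ x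
  /-- condition (c) -/
  le_phi_iff : ∀ x y z : V, graph.InStar x y → graph.InStar x z →
      (phi x z ≤ phi x y ↔ z ≤ y)
  /-- condition (d) -/
  lt_of_phi_ne : ∀ x y : V, graph.InStar x y → phi x y ≠ y → y < x
  /-- condition (e): if `mu x` is finite then the order of `phi x` divides `mu x` -/
  phi_pow_mu : ∀ x : V, phi x ^ (mu x).untopD 0 = 1
  /-- condition (f) -/
  mu_phi : ∀ x y : V, graph.InStar x y → mu (phi x y) = mu y
  /-- condition (g) -/
  phi_phi : ∀ x y z : V, z < y → y < x →
      phi x (phi y z) = phi (phi x y) (phi x z)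

namespace TrickleGraph

variable {V : Type u} [PartialOrder V]

/-- The set of defining relators of the trickle group: `x ^ (mu x)` whenever `mu x ≠ ∞`, and
`phi_x(y) · x · (phi_y(x) · y)⁻¹` for every edge `{x, y}`. -/
def rels (T : TrickleGraph V) : Set (FreeGroup V) :=
  {r | ∃ (x : V) (n : ℕ), T.mu x = (n : ℕ∞) ∧ r = FreeGroup.of x ^ n} ∪
  {r | ∃ x y : V, T.graph.Adj x y ∧
      r = FreeGroup.of (T.phi x y) * FreeGroup.of x *
          (FreeGroup.of (T.phi y x) * FreeGroup.of y)⁻¹}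

end TrickleGraph

/-- The **trickle group** of a trickle graph. -/
abbrev TrickleGroup {V : Type u} [PartialOrder V] (T : TrickleGraph V) : Type u :=
  PresentedGroup T.rels

namespace TrickleGraph

variable {V : Type u} [PartialOrder V]

/-- The image of a vertex in the trickle group. -/
def gen (T : TrickleGraph V) (x : V) : TrickleGroup T := PresentedGroup.of x

/-- `mu` converted to a natural number, with `∞` mapped to `0` (so that `ZMod (T.muNat x)`
is the group `ℤ_{mu x}` of the paper, `ZMod 0 = ℤ` corresponding to `mu x = ∞`). -/
def muNat (T : TrickleGraph V) (x : V) : ℕ := (T.mu x).untopD 0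

/-- The power `phi_x^a` for an exponent `a ∈ ℤ_{mu x}`; it is well defined on representatives
by condition (e). -/
def phiPow (T : TrickleGraph V) (x : V) (a : ZMod (T.muNat x)) : Equiv.Perm V :=
  T.phi x ^ (ZMod.cast a : ℤ)

theorem mu_phi_apply (T : TrickleGraph V) (x y : V) : T.mu (T.phi x y) = T.mu y := by
  by_cases h : T.graph.InStar x y
  · exact T.mu_phi x y h
  · rw [T.phi_apply_of_not_inStar x y h]

theorem mu_phi_zpow (T : TrickleGraph V) (x : V) :
    ∀ (n : ℤ) (y : V), T.mu ((T.phi x ^ n) y) = T.mu y := by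
  have hinv : ∀ y : V, T.mu ((T.phi x)⁻¹ y) = T.mu y := by
    intro y
    conv_rhs => rw [← Equiv.apply_symm_apply (T.phi x) y]
    exact (T.mu_phi_apply x ((T.phi x)⁻¹ y)).symm
  intro n
  induction n using Int.induction_on with
  | zero => intro y; simp
  | succ k ih =>
      intro y
      have h : (T.phi x ^ ((k : ℤ) + 1)) y = (T.phi x ^ (k : ℤ)) (T.phi x y) := by
        rw [zpow_add_one]; rfl
      rw [h, ih (T.phi x y), T.mu_phi_apply]
  | pred k ih =>
      intro y
      have h : (T.phi x ^ (-(k : ℤ) - 1)) y = (T.phi x ^ (-(k : ℤ))) ((T.phi x)⁻¹ y) := by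
        rw [zpow_sub_one]; rfl
      rw [h, ih ((T.phi x)⁻¹ y), hinv]

theorem mu_phiPow (T : TrickleGraph V) (x : V) (a : ZMod (T.muNat x)) (y : V) :
    T.mu ((T.phiPow x a) y) = T.mu y :=
  T.mu_phi_zpow x _ y

theorem muNat_phiPow (T : TrickleGraph V) (x : V) (a : ZMod (T.muNat x)) (y : V) :
    T.muNat ((T.phiPow x a) y) = T.muNat y :=
  congrArg (fun m : ℕ∞ => m.untopD 0) (T.mu_phiPow x a y)

end TrickleGraph

/-- Transport of a `ZMod` element along an equality of moduli. -/
def zmodCongr {m k : ℕ} (h : m = k) (a : ZMod m) : ZMod k := by subst h; exact a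

theorem zmodCongr_ne_zero {m k : ℕ} (h : m = k) {a : ZMod m} (ha : a ≠ 0) :
    zmodCongr h a ≠ 0 := by subst h; exact ha

/-- A **syllable** `x^a`, where `x` is a vertex and `a ∈ ℤ_{mu x} \ {0}`. -/
def Syllable {V : Type u} [PartialOrder V] (T : TrickleGraph V) : Type u :=
  Σ x : V, {a : ZMod (T.muNat x) // a ≠ 0}

namespace Syllable

variable {V : Type u} [PartialOrder V] {T : TrickleGraph V}

/-- The element of the trickle group represented by a syllable. -/
def elm (s : Syllable T) : TrickleGroup T :=
  (PresentedGroup.of s.1 : TrickleGroup T) ^ (ZMod.cast s.2.val : ℤ)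

end Syllable

/-- Syllabic words. -/
abbrev SylWord {V : Type u} [PartialOrder V] (T : TrickleGraph V) := List (Syllable T)

/-- The element of the trickle group represented by a syllabic word. -/
def SylWord.eval {V : Type u} [PartialOrder V] {T : TrickleGraph V} (w : SylWord T) :
    TrickleGroup T :=
  (w.map Syllable.elm).prod

/-- Torsion-freeness as in the older Mathlib: no nontrivial element has finite order. -/
def Monoid.IsTorsionFree (G : Type*) [Monoid G] : Prop :=
  ∀ g : G, g ≠ 1 → ¬IsOfFinOrder g


theorem Equiv.Perm.apply_inv_self {α : Type*} (f : Equiv.Perm α) (x : α) : f (f⁻¹ x) = x :=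
  f.apply_symm_apply x

theorem Equiv.Perm.inv_apply_self {α : Type*} (f : Equiv.Perm α) (x : α) : f⁻¹ (f x) = x :=
  f.symm_apply_apply x

open HNNExtension HNNExtension.NormalWord

namespace HNNTF

variable {G : Type*} [Group G] {A B : Subgroup G} (φ : A ≃* B)

/-- product of a list of pairs as element of HNN extension -/
def prodList (L : List (ℤˣ × G)) : HNNExtension G A B φ :=
  (L.map fun p => t ^ (p.1 : ℤ) * of p.2).prod

@[simp] theorem prodList_nil : prodList φ ([] : List (ℤˣ × G)) = 1 := rfl

theorem prodList_append (L₁ L₂ : List (ℤˣ × G)) :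
    prodList φ (L₁ ++ L₂) = prodList φ L₁ * prodList φ L₂ := by
  simp [prodList]

@[simp] theorem prodList_singleton (u : ℤˣ) (g : G) :
    prodList φ [(u, g)] = t ^ (u : ℤ) * of g := by
  simp [prodList]

theorem prodList_cons (u : ℤˣ) (g : G) (L : List (ℤˣ × G)) :
    prodList φ ((u, g) :: L) = t ^ (u : ℤ) * of g * prodList φ L := by
  simp [prodList, mul_assoc]

/-- the chain relation of reduced words -/
abbrev Rel (A B : Subgroup G) : ℤˣ × G → ℤˣ × G → Prop :=
  fun a b => a.2 ∈ toSubgroup A B a.1 → a.1 = b.1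

theorem chain'_concat_congr {M : List (ℤˣ × G)} {u : ℤˣ} {g g' : G}
    (h : List.Chain' (Rel A B) (M ++ [(u, g)])) :
    List.Chain' (Rel A B) (M ++ [(u, g')]) := by
  simp only [List.Chain'] at h ⊢
  rw [List.isChain_append] at h ⊢
  refine ⟨h.1, List.isChain_singleton _, ?_⟩
  intro x hx y hy
  simp only [List.head?_cons, Option.mem_def, Option.some.injEq] at hy
  subst hy
  exact h.2.2 x hx (u, g) (by simp)

theorem conj_of_mem (u : ℤˣ) (a : G) (ha : a ∈ toSubgroup A B u) :
    t ^ (u : ℤ) * (of a : HNNExtension G A B φ) * (t ^ (u : ℤ))⁻¹ =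
      of ((toSubgroupEquiv φ u ⟨a, ha⟩ : toSubgroup A B (-u)) : G) := by
  rcases Int.units_eq_one_or u with rfl | rfl
  · have h := (equiv_eq_conj (φ := φ) ⟨a, ha⟩).symm
    simp at h ⊢
    exact h
  · simp only [Units.val_neg, Units.val_one, zpow_neg, zpow_one, inv_inv]
    have h := (equiv_symm_eq_conj (φ := φ) ⟨a, ha⟩).symm
    simp [mul_assoc] at h ⊢
    exact h

/-- `rep K n` is `n` copies of `K` concatenated -/
def rep (K : List (ℤˣ × G)) : ℕ → List (ℤˣ × G)
  | 0 => []
  | n + 1 => K ++ rep K n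

omit [Group G] in
theorem rep_head? (K : List (ℤˣ × G)) (hK : K ≠ []) (n : ℕ) :
    rep K n = [] ∨ (rep K n).head? = K.head? := by
  induction n with
  | zero => exact Or.inl rfl
  | succ n _ =>
    right
    rw [rep, List.head?_append_of_ne_nil _ hK]

omit [Group G] in
theorem rep_length (K : List (ℤˣ × G)) (n : ℕ) : (rep K n).length = n * K.length := by
  induction n with
  | zero => simp [rep]
  | succ n ih => simp [rep, ih]; ring

theorem rep_prod (K : List (ℤˣ × G)) (n : ℕ) :
    prodList φ (rep K n) = (prodList φ K) ^ n := by
  induction n with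
  | zero => simp [rep]
  | succ n ih => rw [rep, prodList_append, ih, pow_succ']

theorem rep_chain' {K : List (ℤˣ × G)} (hc : List.Chain' (Rel A B) K)
    (hcyc : ∀ p ∈ K.getLast?, ∀ q ∈ K.head?, Rel A B p q) (n : ℕ) :
    List.Chain' (Rel A B) (rep K n) := by
  induction n with
  | zero => exact List.isChain_nil
  | succ n ih =>
    simp only [rep, List.Chain']
    rw [List.isChain_append]
    refine ⟨hc, ih, ?_⟩
    intro x hx y hy
    rcases rep_head? K (by rintro rfl; simp at hx) n with h | h
    · rw [h] at hy; simp at hy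
    · rw [h] at hy
      exact hcyc x hx y hy

theorem main_aux (hG : ∀ (g : G) (n : ℕ), 0 < n → g ^ n = 1 → g = 1) :
    ∀ (k : ℕ) (h : G) (L : List (ℤˣ × G)), List.Chain' (Rel A B) L → L.length = k →
      ∀ n : ℕ, 0 < n → (of h * prodList φ L) ^ n = 1 → of h * prodList φ L = 1 := by
  intro k
  induction k using Nat.strong_induction_on with
  | _ k ih =>
    intro h L hchain hlen n hn hpow
    rcases L.eq_nil_or_concat with rfl | ⟨M, ⟨uk, gk⟩, rfl⟩
    · -- length 0 case
      simp only [prodList_nil, mul_one] at hpow ⊢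
      have h1 : (of (h ^ n) : HNNExtension G A B φ) = of 1 := by
        rw [map_pow, map_one]; exact hpow
      have h2 : h = 1 := hG h n hn (of_injective (φ := φ) h1)
      rw [h2, map_one]
    · rw [List.concat_eq_append] at hchain hlen ⊢
      rw [List.concat_eq_append] at hpow
      set a : G := gk * h with hadef
      set K : List (ℤˣ × G) := M ++ [(uk, a)] with hKdef
      have hKchain : List.Chain' (Rel A B) K := chain'_concat_congr hchain
      have hKlast : K.getLast? = some (uk, a) := List.getLast?_concat
      set y : HNNExtension G A B φ := prodList φ K with hy
      have hprod_conj : of h * prodList φ (M ++ [(uk, gk)]) = of h * y * (of h)⁻¹ := by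
        rw [hy, hKdef, prodList_append, prodList_append, prodList_singleton,
          prodList_singleton, hadef, map_mul]
        group
      have hypow : y ^ n = 1 := by
        rw [hprod_conj] at hpow
        rwa [conj_pow, conj_eq_one_iff] at hpow
      rw [hprod_conj]
      -- suffices y = 1
      suffices hy1 : y = 1 by rw [hy1]; group
      -- the "cyclically reduced" case, in which we derive a contradiction
      have cycCase : (∀ p ∈ K.getLast?, ∀ q ∈ K.head?, Rel A B p q) → y = 1 := by
        intro hcyc
        exfalso
        have hrw : (⟨1, rep K n, rep_chain' hKchain hcyc n⟩ :
            ReducedWord G A B).prod φ ∈ (of.range : Subgroup (HNNExtension G A B φ)) := by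
          show (of 1 * prodList φ (rep K n) : HNNExtension G A B φ) ∈ _
          rw [map_one, one_mul, rep_prod, hypow]
          exact one_mem _
        have h0 := ReducedWord.toList_eq_nil_of_mem_of_range φ _ hrw
        simp only at h0
        have hlen0 : n * K.length = 0 := by rw [← rep_length K n, h0]; rfl
        have hK0 : K.length ≠ 0 := by simp [hKdef]
        rcases Nat.mul_eq_zero.1 hlen0 with h1 | h1
        · omega
        · exact hK0 h1
      rcases hM : M with _ | ⟨⟨u1, g1⟩, M₁⟩
      · -- M = [], cyclically reduced automatically
        apply cycCase
        intro p hp q hq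
        have hhead : K.head? = some (uk, a) := by rw [hKdef, hM]; rfl
        rw [hKlast, Option.mem_def, Option.some.injEq] at hp
        rw [hhead, Option.mem_def, Option.some.injEq] at hq
        subst hp; subst hq
        intro _; rfl
      · by_cases hpinch : a ∈ toSubgroup A B uk ∧ uk ≠ u1
        · -- pinch case
          obtain ⟨ha, hne⟩ := hpinch
          have hu1 : u1 = -uk := by
            rcases Int.units_eq_one_or uk with h1 | h1 <;>
              rcases Int.units_eq_one_or u1 with h2 | h2 <;> simp_all
          set b : G := ((toSubgroupEquiv φ uk ⟨a, ha⟩ : toSubgroup A B (-uk)) : G) with hbdef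
          set z : HNNExtension G A B φ :=
            of g1 * prodList φ M₁ * (t ^ (uk : ℤ) * of a * t ^ (u1 : ℤ)) with hz
          have hyz : y = t ^ (u1 : ℤ) * z * (t ^ (u1 : ℤ))⁻¹ := by
            rw [hy, hKdef, hM, List.cons_append, prodList_cons, prodList_append,
              prodList_singleton, hz]
            group
          have hzpow : z ^ n = 1 := by
            have hzy : z = (t ^ (u1 : ℤ))⁻¹ * y * ((t ^ (u1 : ℤ))⁻¹)⁻¹ := by
              rw [hyz]; group
            rw [hzy, conj_pow, hypow]
            group
          have htinv : (t : HNNExtension G A B φ) ^ (u1 : ℤ) = (t ^ (uk : ℤ))⁻¹ := by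
            rw [hu1]; simp [zpow_neg]
          have hzb : z = of g1 * prodList φ M₁ * of b := by
            rw [hz, htinv, conj_of_mem φ uk a ha, hbdef]
          have hM₁chain : List.Chain' (Rel A B) M₁ := by
            have h1 : List.Chain' (Rel A B) ((u1, g1) :: (M₁ ++ [(uk, a)])) := by
              rw [hKdef, hM] at hKchain
              exact hKchain
            exact (List.isChain_append.1 (List.isChain_cons.1 h1).2).1
          have hz1 : z = 1 := by
            rcases M₁.eq_nil_or_concat with hM₁ | ⟨M₂, ⟨u', g'⟩, hM₁⟩
            · -- z = of (g1 * b)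
              have : z = of (g1 * b) * prodList φ [] := by
                rw [hzb, hM₁, prodList_nil, map_mul]; group
              rw [this]
              refine ih 0 ?_ (g1 * b) [] List.isChain_nil rfl n hn (by rw [← this]; exact hzpow)
              subst hlen; rw [hM]; simp
            · rw [List.concat_eq_append] at hM₁
              have hzform : z = of g1 * prodList φ (M₂ ++ [(u', g' * b)]) := by
                rw [hzb, hM₁, prodList_append, prodList_append, prodList_singleton,
                  prodList_singleton, map_mul]
                group
              rw [hzform]
              have hchain2 : List.Chain' (Rel A B) (M₂ ++ [(u', g' * b)]) := by
                rw [hM₁] at hM₁chain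
                exact chain'_concat_congr hM₁chain
              have hlt : (M₂ ++ [(u', g' * b)]).length < k := by
                subst hlen; rw [hM, hM₁]; simp
              refine ih _ hlt g1 _ hchain2 rfl n hn ?_
              rw [← hzform]; exact hzpow
          rw [hyz, hz1]; group
        · -- cyclically reduced case
          apply cycCase
          intro p hp q hq
          rw [hKlast, Option.mem_def, Option.some.injEq] at hp
          subst hp
          have : K.head? = some (u1, g1) := by rw [hKdef, hM]; rfl
          rw [this, Option.mem_def, Option.some.injEq] at hq
          subst hq
          intro hmem
          by_contra hne
          exact hpinch ⟨hmem, hne⟩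

/-- Torsion-freeness of HNN extensions of torsion-free groups. -/
theorem isTorsionFree (hG : Monoid.IsTorsionFree G) :
    Monoid.IsTorsionFree (HNNExtension G A B φ) := by
  have hG' : ∀ (g : G) (n : ℕ), 0 < n → g ^ n = 1 → g = 1 := by
    intro g n hn hgn
    by_contra hg1
    exact hG g hg1 (isOfFinOrder_iff_pow_eq_one.2 ⟨n, hn, hgn⟩)
  intro x hx hfin
  obtain ⟨n, hn, hxn⟩ := isOfFinOrder_iff_pow_eq_one.1 hfin
  apply hx
  rcases TransversalPair.nonempty G A B with ⟨d⟩
  set w : NormalWord d := equiv φ d x with hw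
  have hwx : of w.head * prodList φ w.toList = x := by
    have h1 : w.prod φ = x := (equiv φ d).symm_apply_apply x
    exact h1
  rw [← hwx]
  exact main_aux φ hG' w.toList.length w.head w.toList w.chain rfl n hn (by rw [hwx]; exact hxn)

end HNNTF
namespace TrickleAux

open TrickleGraph

variable {V : Type u} [PartialOrder V]

/-- A lower subset of the vertices. -/
def Lower (Λ : Set V) : Prop := ∀ ⦃y z : V⦄, y ≤ z → z ∈ Λ → y ∈ Λ

variable (T : TrickleGraph V)

theorem phi_fix {x y : V} (h : ¬ y < x) : T.phi x y = y := by
  by_cases hin : T.graph.InStar x y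
  · by_contra hne
    exact h (T.lt_of_phi_ne x y hin hne)
  · exact T.phi_apply_of_not_inStar x y hin

theorem phi_self (x : V) : T.phi x x = x := phi_fix T (lt_irrefl x)

theorem inStar_self (x : V) : T.graph.InStar x x := Or.inl rfl

theorem inStar_of_adj {x y : V} (h : T.graph.Adj x y) : T.graph.InStar x y := Or.inr h

theorem phi_lt {x y : V} (h : y < x) : T.phi x y < x := by
  have hin : T.graph.InStar x y := inStar_of_adj T ((T.adj_of_lt y x h).symm)
  have hle : T.phi x y ≤ x := by
    have := (T.le_phi_iff x x y (inStar_self T x) hin).2 h.le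
    rwa [phi_self] at this
  rcases lt_or_eq_of_le hle with h1 | h1
  · exact h1
  · exfalso
    have : T.phi x y = T.phi x x := by rw [h1, phi_self]
    have := (T.phi x).injective this
    exact absurd (this ▸ h) (lt_irrefl x)

theorem phi_le_self {x y : V} (h : y ≤ x) : T.phi x y ≤ x := by
  rcases lt_or_eq_of_le h with h1 | h1
  · exact (phi_lt T h1).le
  · subst h1; rw [phi_self]

/-- The defining relation of the trickle group. -/
theorem trickleRel {x y : V} (h : T.graph.Adj x y) :
    gen T (T.phi x y) * gen T x = gen T (T.phi y x) * gen T y := by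
  have hr : (FreeGroup.of (T.phi x y) * FreeGroup.of x *
      (FreeGroup.of (T.phi y x) * FreeGroup.of y)⁻¹) ∈ T.rels :=
    Or.inr ⟨x, y, h, rfl⟩
  have h1 : (PresentedGroup.mk T.rels) (FreeGroup.of (T.phi x y) * FreeGroup.of x *
      (FreeGroup.of (T.phi y x) * FreeGroup.of y)⁻¹) = 1 :=
    (QuotientGroup.eq_one_iff _).2 (Subgroup.subset_normalClosure hr)
  rw [map_mul, map_inv, map_mul, map_mul, mul_inv_eq_one] at h1
  exact h1

/-- For a maximal vertex `x`, conjugation by `x` realizes `phi x` on neighbours. -/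
theorem conjRel {x : V} (hmax : ∀ y, ¬ x < y) {v : V} (h : T.graph.Adj x v) :
    gen T (T.phi x v) * gen T x = gen T x * gen T v := by
  have h1 := trickleRel T h
  rwa [phi_fix T (hmax v)] at h1

/-- Key consequence of conditions (b), (c), (d), (g): for a maximal vertex `x`,
`phi x` is compatible with the `phi` of neighbouring vertices. -/
theorem phi_claim {x y z : V} (hmax : ∀ w, ¬ x < w) (hxy : T.graph.Adj x y)
    (hxz : T.graph.Adj x z) (hyz : T.graph.Adj y z) :
    T.phi x (T.phi y z) = T.phi (T.phi x y) (T.phi x z) := by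
  by_cases hzy : z < y
  · by_cases hyx : y < x
    · exact T.phi_phi x y z hzy hyx
    · -- y and x are incomparable
      have hxny : ¬ x ≤ y := by
        intro hle
        rcases lt_or_eq_of_le hle with h1 | h1
        · exact hmax y h1
        · exact hxy.ne h1
      have hynx : ¬ y ≤ x := by
        intro hle
        rcases lt_or_eq_of_le hle with h1 | h1
        · exact hyx h1
        · exact hxy.ne' h1
      have hz := T.adj_incomp x y z hxy hxny hynx hzy.le
      have hfy : T.phi x y = y := phi_fix T (fun h1 => hynx h1.le)
      have hfz : T.phi x z = z := phi_fix T (fun h1 => hz.2.2 h1.le)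
      have hwy : T.phi y z ≤ y := phi_le_self T hzy.le
      have hw := T.adj_incomp x y (T.phi y z) hxy hxny hynx hwy
      have hfw : T.phi x (T.phi y z) = T.phi y z := phi_fix T (fun h1 => hw.2.2 h1.le)
      rw [hfy, hfz, hfw]
  · -- phi y fixes z
    have hfyz : T.phi y z = z := phi_fix T hzy
    rw [hfyz]
    have hin_y : T.graph.InStar x y := inStar_of_adj T hxy
    have hin_z : T.graph.InStar x z := inStar_of_adj T hxz
    have : ¬ T.phi x z < T.phi x y := by
      intro hlt
      have hle := (T.le_phi_iff x y z hin_y hin_z).1 hlt.le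
      rcases lt_or_eq_of_le hle with h1 | h1
      · exact hzy h1
      · exact hyz.ne' h1
    rw [phi_fix T this]

variable {Λ : Set V}

theorem phi_mem_iff (hΛ : Lower Λ) {y : V} (hy : y ∈ Λ) (v : V) :
    v ∈ Λ ↔ T.phi y v ∈ Λ := by
  by_cases h : T.phi y v = v
  · rw [h]
  · have hvy : v < y := by
      by_cases hin : T.graph.InStar y v
      · exact T.lt_of_phi_ne y v hin h
      · exact absurd (T.phi_apply_of_not_inStar y v hin) h
    constructor
    · intro _
      exact hΛ (phi_lt T hvy).le hy
    · intro _
      exact hΛ hvy.le hy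

/-- Restriction of a preGarside trickle graph to a lower set of vertices. -/
def restrict (hmu : ∀ v : V, T.mu v = ⊤) (hΛ : Lower Λ) : TrickleGraph ↥Λ where
  graph :=
    { Adj := fun a b => T.graph.Adj a b
      symm := ⟨fun a b h => T.graph.adj_symm h⟩
      loopless := ⟨fun a h => T.graph.irrefl h⟩ }
  mu := fun a => T.mu a.1
  phi := fun a => (T.phi a.1).subtypePerm (fun v => (phi_mem_iff T hΛ a.2 v).symm)
  two_le_mu := fun a => T.two_le_mu a.1
  adj_of_lt := fun a b h => T.adj_of_lt a.1 b.1 (Subtype.coe_lt_coe.2 h)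
  phi_apply_of_not_inStar := fun a b h => by
    apply Subtype.ext
    apply T.phi_apply_of_not_inStar a.1 b.1
    intro hin
    apply h
    rcases hin with h1 | h1
    · exact Or.inl (Subtype.ext h1)
    · exact Or.inr h1
  inStar_phi := fun a b h => by
    have h1 : T.graph.InStar a.1 b.1 := by
      rcases h with h1 | h1
      · exact Or.inl (congrArg Subtype.val h1)
      · exact Or.inr h1
    rcases T.inStar_phi a.1 b.1 h1 with h2 | h2
    · exact Or.inl (Subtype.ext h2)
    · exact Or.inr h2
  adj_phi_iff := fun a b c hb hc => by
    apply T.adj_phi_iff a.1 b.1 c.1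
    · rcases hb with h1 | h1
      · exact Or.inl (congrArg Subtype.val h1)
      · exact Or.inr h1
    · rcases hc with h1 | h1
      · exact Or.inl (congrArg Subtype.val h1)
      · exact Or.inr h1
  adj_incomp := fun a b c hab hnab hnba hcb => by
    have := T.adj_incomp a.1 b.1 c.1 hab
      (fun h => hnab (Subtype.coe_le_coe.1 h))
      (fun h => hnba (Subtype.coe_le_coe.1 h))
      (Subtype.coe_le_coe.2 hcb)
    exact ⟨this.1, fun h => this.2.1 (Subtype.coe_le_coe.2 h),
      fun h => this.2.2 (Subtype.coe_le_coe.2 h)⟩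
  le_phi_iff := fun a b c hb hc => by
    have h1 : T.graph.InStar a.1 b.1 := by
      rcases hb with h | h
      · exact Or.inl (congrArg Subtype.val h)
      · exact Or.inr h
    have h2 : T.graph.InStar a.1 c.1 := by
      rcases hc with h | h
      · exact Or.inl (congrArg Subtype.val h)
      · exact Or.inr h
    constructor
    · intro h
      exact (T.le_phi_iff a.1 b.1 c.1 h1 h2).1 (Subtype.coe_le_coe.2 h)
    · intro h
      exact Subtype.coe_le_coe.1 ((T.le_phi_iff a.1 b.1 c.1 h1 h2).2 h)
  lt_of_phi_ne := fun a b h hne => by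
    have h1 : T.graph.InStar a.1 b.1 := by
      rcases h with h | h
      · exact Or.inl (congrArg Subtype.val h)
      · exact Or.inr h
    have h2 : T.phi a.1 b.1 ≠ b.1 := fun hc => hne (Subtype.ext hc)
    exact Subtype.coe_lt_coe.1 (T.lt_of_phi_ne a.1 b.1 h1 h2)
  phi_pow_mu := fun a => by
    show _ ^ WithTop.untopD 0 (T.mu a.1) = 1
    rw [hmu a.1]
    rfl
  mu_phi := fun a b h => by
    have h1 : T.graph.InStar a.1 b.1 := by
      rcases h with h | h
      · exact Or.inl (congrArg Subtype.val h)
      · exact Or.inr h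
    exact T.mu_phi a.1 b.1 h1
  phi_phi := fun a b c hcb hba => by
    apply Subtype.ext
    exact T.phi_phi a.1 b.1 c.1 (Subtype.coe_lt_coe.2 hcb) (Subtype.coe_lt_coe.2 hba)

theorem restrict_mu (hmu : ∀ v : V, T.mu v = ⊤) (hΛ : Lower Λ) :
    ∀ a : ↥Λ, (restrict T hmu hΛ).mu a = ⊤ := fun a => hmu a.1

@[simp] theorem restrict_phi_coe (hmu : ∀ v : V, T.mu v = ⊤) (hΛ : Lower Λ) (a b : ↥Λ) :
    (((restrict T hmu hΛ).phi a b : ↥Λ) : V) = T.phi a.1 b.1 := rfl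

@[simp] theorem restrict_adj (hmu : ∀ v : V, T.mu v = ⊤) (hΛ : Lower Λ) (a b : ↥Λ) :
    (restrict T hmu hΛ).graph.Adj a b ↔ T.graph.Adj a.1 b.1 := Iff.rfl

end TrickleAux
namespace TrickleAux

open TrickleGraph

variable {V : Type u} {W : Type v} [PartialOrder V] [PartialOrder W]

theorem rels_form {T : TrickleGraph V} (hmu : ∀ v : V, T.mu v = ⊤) {r : FreeGroup V}
    (hr : r ∈ T.rels) :
    ∃ x y : V, T.graph.Adj x y ∧
      r = FreeGroup.of (T.phi x y) * FreeGroup.of x *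
        (FreeGroup.of (T.phi y x) * FreeGroup.of y)⁻¹ := by
  rcases hr with ⟨x, n, hx, _⟩ | h
  · rw [hmu x] at hx
    exact absurd hx.symm (WithTop.coe_ne_top)
  · exact h

variable (T₁ : TrickleGraph V) (T₂ : TrickleGraph W)

/-- A vertex map compatible with the trickle structures induces a homomorphism of
trickle groups. -/
def mapHom (hmu : ∀ v : V, T₁.mu v = ⊤) (f : V → W)
    (hadj : ∀ {y z : V}, T₁.graph.Adj y z → T₂.graph.Adj (f y) (f z))
    (hphi : ∀ {y z : V}, T₁.graph.Adj y z → f (T₁.phi y z) = T₂.phi (f y) (f z)) :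
    TrickleGroup T₁ →* TrickleGroup T₂ :=
  PresentedGroup.toGroup (f := fun v => gen T₂ (f v)) (by
    intro r hr
    obtain ⟨y, z, hyz, rfl⟩ := rels_form hmu hr
    rw [map_mul, map_mul, map_inv, map_mul, mul_inv_eq_one]
    simp only [FreeGroup.lift_apply_of]
    rw [hphi hyz, hphi hyz.symm]
    exact trickleRel T₂ (hadj hyz))

theorem mapHom_gen (hmu : ∀ v : V, T₁.mu v = ⊤) (f : V → W)
    (hadj : ∀ {y z : V}, T₁.graph.Adj y z → T₂.graph.Adj (f y) (f z))
    (hphi : ∀ {y z : V}, T₁.graph.Adj y z → f (T₁.phi y z) = T₂.phi (f y) (f z)) (v : V) :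
    mapHom T₁ T₂ hmu f hadj hphi (gen T₁ v) = gen T₂ (f v) :=
  PresentedGroup.toGroup.of _

/-- transfer torsion-freeness along an injective homomorphism -/
theorem isTorsionFree_of_injective {G H : Type*} [Group G] [Group H] (f : G →* H)
    (hf : Function.Injective f) (hH : Monoid.IsTorsionFree H) : Monoid.IsTorsionFree G := by
  intro g hg hfin
  obtain ⟨n, hn, hgn⟩ := isOfFinOrder_iff_pow_eq_one.1 hfin
  refine hH (f g) (fun h => hg (hf (by rw [h, map_one]))) ?_
  exact isOfFinOrder_iff_pow_eq_one.2 ⟨n, hn, by rw [← map_pow, hgn, map_one]⟩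

theorem subsingleton_of_isEmpty [IsEmpty V] (T : TrickleGraph V) (g : TrickleGroup T) :
    g = 1 := by
  refine PresentedGroup.induction_on (C := fun g => g = 1) g ?_
  intro z
  induction z using FreeGroup.induction_on with
    | C1 => exact map_one (PresentedGroup.mk T.rels)
    | of x => exact isEmptyElim x
    | inv_of x _ => exact isEmptyElim x
    | mul a b ha hb =>
      show PresentedGroup.mk T.rels (a * b) = 1
      rw [map_mul]
      rw [show PresentedGroup.mk T.rels a = 1 from ha,
        show PresentedGroup.mk T.rels b = 1 from hb, mul_one]

end TrickleAux
namespace TrickleAux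

open TrickleGraph

variable {V : Type u} [PartialOrder V]

section Step

variable (T : TrickleGraph V) (hmu : ∀ v : V, T.mu v = ⊤) (x : V) (hmax : ∀ y : V, ¬ x < y)

include hmax in
theorem lam_lower : Lower {y : V | y ≠ x} := by
  intro y z hyz hz hy
  subst hy
  rcases lt_or_eq_of_le hyz with h | h
  · exact hmax z h
  · exact hz h.symm

include hmax in
theorem link_lower : Lower {y : V | T.graph.Adj x y} := by
  intro y z hyz hz
  by_cases hzx : z ≤ x
  · rcases lt_or_eq_of_le hzx with h1 | h1
    · have : y < x := lt_of_le_of_lt hyz h1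
      exact (T.adj_of_lt y x this).symm
    · exact absurd h1 (SimpleGraph.Adj.ne' hz)
  · have hxz : ¬ x ≤ z := by
      intro hle
      rcases lt_or_eq_of_le hle with h1 | h1
      · exact hmax z h1
      · exact (SimpleGraph.Adj.ne hz) h1
    exact (T.adj_incomp x z y hz hxz hzx hyz).1

theorem link_sub : {y : V | T.graph.Adj x y} ⊆ {y : V | y ≠ x} := fun _ h =>
  SimpleGraph.Adj.ne' h

/-- The trickle graph on the link of `x`. -/
abbrev TL : TrickleGraph ↥{y : V | T.graph.Adj x y} :=
  restrict T hmu (link_lower T x hmax)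

/-- The trickle graph on the complement of `x`. -/
abbrev Tlam : TrickleGraph ↥{y : V | y ≠ x} :=
  restrict T hmu (lam_lower x hmax)

/-- The inclusion of the trickle group of the link into that of the complement. -/
def iotaHom : TrickleGroup (TL T hmu x hmax) →* TrickleGroup (Tlam T hmu x hmax) :=
  mapHom _ _ (restrict_mu T hmu _) (fun v => ⟨v.1, link_sub T x v.2⟩)
    (fun h => h) (fun _ => rfl)

/-- The inclusion of the trickle group of the complement into the whole trickle group. -/
def inclLam : TrickleGroup (Tlam T hmu x hmax) →* TrickleGroup T :=
  mapHom _ T (restrict_mu T hmu _) Subtype.val (fun h => h) (fun _ => rfl)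

theorem phi_maps_link {v : V} (hv : T.graph.Adj x v) : T.graph.Adj x (T.phi x v) := by
  rcases T.inStar_phi x v (inStar_of_adj T hv) with h | h
  · exfalso
    have : v = x := (T.phi x).injective (h.trans (phi_self T x).symm)
    exact hv.ne' this
  · exact h

theorem phi_pow_maps_link (k : ℕ) : ∀ {v : V}, T.graph.Adj x v →
    T.graph.Adj x ((T.phi x ^ k) v) := by
  induction k with
  | zero => exact fun hv => hv
  | succ k ih =>
    intro v hv
    have hstep : (T.phi x ^ (k + 1)) v = (T.phi x ^ k) (T.phi x v) := by
      rw [pow_succ, Equiv.Perm.mul_apply]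
    rw [hstep]
    exact ih (phi_maps_link T x hv)

theorem phi_inv_maps_link [Finite V] {v : V} (hv : T.graph.Adj x v) :
    T.graph.Adj x ((T.phi x)⁻¹ v) := by
  have hord : 0 < orderOf (T.phi x) := orderOf_pos _
  have h1 : T.phi x ^ (orderOf (T.phi x) - 1) * T.phi x = 1 := by
    rw [← pow_succ, Nat.sub_add_cancel hord, pow_orderOf_eq_one]
  have h2 : (T.phi x)⁻¹ = T.phi x ^ (orderOf (T.phi x) - 1) :=
    (eq_inv_of_mul_eq_one_left h1).symm
  rw [h2]
  exact phi_pow_maps_link T x _ hv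

/-- The automorphism of the link trickle group induced by `phi x`. -/
def psiHom : TrickleGroup (TL T hmu x hmax) →* TrickleGroup (TL T hmu x hmax) :=
  mapHom _ _ (restrict_mu T hmu _) (fun v => ⟨T.phi x v.1, phi_maps_link T x v.2⟩)
    (fun {y z} h =>
      (T.adj_phi_iff x y.1 z.1 (inStar_of_adj T y.2) (inStar_of_adj T z.2)).2 h)
    (fun {y z} h => Subtype.ext (phi_claim T hmax y.2 z.2 h))

/-- The inverse of `psiHom`. -/
def psiInv [Finite V] : TrickleGroup (TL T hmu x hmax) →* TrickleGroup (TL T hmu x hmax) :=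
  mapHom _ _ (restrict_mu T hmu _) (fun v => ⟨(T.phi x)⁻¹ v.1, phi_inv_maps_link T x v.2⟩)
    (fun {y z} h => by
      have h1 := T.adj_phi_iff x ((T.phi x)⁻¹ y.1) ((T.phi x)⁻¹ z.1)
        (inStar_of_adj T (phi_inv_maps_link T x y.2))
        (inStar_of_adj T (phi_inv_maps_link T x z.2))
      apply h1.1
      rw [Equiv.Perm.apply_inv_self, Equiv.Perm.apply_inv_self]
      exact h)
    (fun {y z} h => by
      have hadj : T.graph.Adj ((T.phi x)⁻¹ y.1) ((T.phi x)⁻¹ z.1) := by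
        have h1 := T.adj_phi_iff x ((T.phi x)⁻¹ y.1) ((T.phi x)⁻¹ z.1)
          (inStar_of_adj T (phi_inv_maps_link T x y.2))
          (inStar_of_adj T (phi_inv_maps_link T x z.2))
        apply h1.1
        rw [Equiv.Perm.apply_inv_self, Equiv.Perm.apply_inv_self]
        exact h
      have hclaim := phi_claim T hmax (phi_inv_maps_link T x y.2)
        (phi_inv_maps_link T x z.2) hadj
      rw [Equiv.Perm.apply_inv_self, Equiv.Perm.apply_inv_self] at hclaim
      apply Subtype.ext
      show (T.phi x)⁻¹ (T.phi y.1 z.1) =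
        T.phi ((T.phi x)⁻¹ y.1) ((T.phi x)⁻¹ z.1)
      rw [← hclaim, Equiv.Perm.inv_apply_self])

theorem iotaHom_gen (v : ↥{y : V | T.graph.Adj x y}) :
    iotaHom T hmu x hmax (gen (TL T hmu x hmax) v) =
      gen (Tlam T hmu x hmax) ⟨v.1, link_sub T x v.2⟩ :=
  by
    apply mapHom_gen
    intro y z h
    rfl

theorem inclLam_gen (v : ↥{y : V | y ≠ x}) :
    inclLam T hmu x hmax (gen (Tlam T hmu x hmax) v) = gen T v.1 :=
  by
    apply mapHom_gen
    intro y z h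
    rfl

theorem psiHom_gen (v : ↥{y : V | T.graph.Adj x y}) :
    psiHom T hmu x hmax (gen (TL T hmu x hmax) v) =
      gen (TL T hmu x hmax) ⟨T.phi x v.1, phi_maps_link T x v.2⟩ :=
  by
    apply mapHom_gen
    case hadj =>
      intro y z h
      exact (T.adj_phi_iff x y.1 z.1 (inStar_of_adj T y.2) (inStar_of_adj T z.2)).2 h
    case hphi =>
      intro y z h
      exact Subtype.ext (phi_claim T hmax y.2 z.2 h)

theorem psiInv_gen [Finite V] (v : ↥{y : V | T.graph.Adj x y}) :
    psiInv T hmu x hmax (gen (TL T hmu x hmax) v) =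
      gen (TL T hmu x hmax) ⟨(T.phi x)⁻¹ v.1, phi_inv_maps_link T x v.2⟩ :=
  by
    apply mapHom_gen
    case hadj =>
      intro y z h
      have h1 := T.adj_phi_iff x ((T.phi x)⁻¹ y.1) ((T.phi x)⁻¹ z.1)
        (inStar_of_adj T (phi_inv_maps_link T x y.2))
        (inStar_of_adj T (phi_inv_maps_link T x z.2))
      apply h1.1
      rw [Equiv.Perm.apply_inv_self, Equiv.Perm.apply_inv_self]
      exact h
    case hphi =>
      intro y z h
      have hadj : T.graph.Adj ((T.phi x)⁻¹ y.1) ((T.phi x)⁻¹ z.1) := by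
        have h1 := T.adj_phi_iff x ((T.phi x)⁻¹ y.1) ((T.phi x)⁻¹ z.1)
          (inStar_of_adj T (phi_inv_maps_link T x y.2))
          (inStar_of_adj T (phi_inv_maps_link T x z.2))
        apply h1.1
        rw [Equiv.Perm.apply_inv_self, Equiv.Perm.apply_inv_self]
        exact h
      have hclaim := phi_claim T hmax (phi_inv_maps_link T x y.2)
        (phi_inv_maps_link T x z.2) hadj
      rw [Equiv.Perm.apply_inv_self, Equiv.Perm.apply_inv_self] at hclaim
      apply Subtype.ext
      show (T.phi x)⁻¹ (T.phi y.1 z.1) =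
        T.phi ((T.phi x)⁻¹ y.1) ((T.phi x)⁻¹ z.1)
      rw [← hclaim, Equiv.Perm.inv_apply_self]

theorem psiHom_comp_psiInv [Finite V] :
    (psiHom T hmu x hmax).comp (psiInv T hmu x hmax) = MonoidHom.id _ := by
  ext v
  show psiHom T hmu x hmax (psiInv T hmu x hmax (gen (TL T hmu x hmax) v)) =
    gen (TL T hmu x hmax) v
  rw [psiInv_gen, psiHom_gen]
  exact congrArg (gen _) (Subtype.ext (Equiv.Perm.apply_inv_self _ _))

theorem psiInv_comp_psiHom [Finite V] :
    (psiInv T hmu x hmax).comp (psiHom T hmu x hmax) = MonoidHom.id _ := by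
  ext v
  show psiInv T hmu x hmax (psiHom T hmu x hmax (gen (TL T hmu x hmax) v)) =
    gen (TL T hmu x hmax) v
  rw [psiHom_gen, psiInv_gen]
  exact congrArg (gen _) (Subtype.ext (Equiv.Perm.inv_apply_self _ _))

end Step

end TrickleAux
namespace TrickleAux

open TrickleGraph

variable {V : Type u} [PartialOrder V]

section Step

variable (T : TrickleGraph V) (hmu : ∀ v : V, T.mu v = ⊤) (x : V) (hmax : ∀ y : V, ¬ x < y)

theorem hnn_step [Finite V] (hinj : Function.Injective (iotaHom T hmu x hmax)) :
    Function.Injective (inclLam T hmu x hmax) ∧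
      (Monoid.IsTorsionFree (TrickleGroup (Tlam T hmu x hmax)) →
        Monoid.IsTorsionFree (TrickleGroup T)) := by
  classical
  set ι := iotaHom T hmu x hmax with hι
  set A : Subgroup (TrickleGroup (Tlam T hmu x hmax)) := ι.range with hA
  let eA : TrickleGroup (TL T hmu x hmax) ≃* A := MonoidHom.ofInjective hinj
  let ψ : TrickleGroup (TL T hmu x hmax) ≃* TrickleGroup (TL T hmu x hmax) :=
    MonoidHom.toMulEquiv (psiHom T hmu x hmax) (psiInv T hmu x hmax)
      (psiInv_comp_psiHom T hmu x hmax) (psiHom_comp_psiInv T hmu x hmax)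
  let θ : A ≃* A := (eA.symm.trans ψ).trans eA
  have hθ : ∀ w, θ (eA w) = eA (psiHom T hmu x hmax w) := by
    intro w
    show eA (ψ (eA.symm (eA w))) = _
    rw [MulEquiv.symm_apply_apply]
    rfl
  have hcoe : ∀ w, ((eA w : A) : TrickleGroup (Tlam T hmu x hmax)) = ι w := by
    intro w
    exact MonoidHom.ofInjective_apply hinj
  -- the key commutation identity in the HNN extension
  have key : ∀ (v : V) (hv : T.graph.Adj x v),
      (HNNExtension.t : HNNExtension (TrickleGroup (Tlam T hmu x hmax)) A A θ) *
          HNNExtension.of (gen (Tlam T hmu x hmax) ⟨v, hv.ne'⟩) =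
        HNNExtension.of (gen (Tlam T hmu x hmax)
            ⟨T.phi x v, (phi_maps_link T x hv).ne'⟩) * HNNExtension.t := by
    intro v hv
    have h1 := HNNExtension.t_mul_of (φ := θ) (eA (gen (TL T hmu x hmax) ⟨v, hv⟩))
    rw [hθ, hcoe, hcoe, psiHom_gen, iotaHom_gen, iotaHom_gen] at h1
    exact h1
  -- the homomorphism from the trickle group to the HNN extension
  have hFrels : ∀ r ∈ T.rels, (FreeGroup.lift (fun v : V =>
      if h : v = x then (HNNExtension.t : HNNExtension (TrickleGroup (Tlam T hmu x hmax)) A A θ)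
      else HNNExtension.of (gen (Tlam T hmu x hmax) ⟨v, h⟩))) r = 1 := by
    intro r hr
    obtain ⟨y, z, hyz, rfl⟩ := rels_form hmu hr
    rw [map_mul, map_mul, map_inv, map_mul, mul_inv_eq_one]
    simp only [FreeGroup.lift_apply_of]
    by_cases hy : y = x
    · -- y = x
      have hyz' : T.graph.Adj x z := hy ▸ hyz
      have hzx : z ≠ x := hyz'.ne'
      rw [hy, phi_fix T (hmax z), dif_pos rfl, dif_neg hzx,
        dif_neg (phi_maps_link T x hyz').ne']
      exact (key z hyz').symm
    · by_cases hz : z = x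
      · -- z = x
        have hyz' : T.graph.Adj x y := hz ▸ hyz.symm
        rw [hz, phi_fix T (hmax y), dif_pos rfl, dif_neg hy,
          dif_neg (phi_maps_link T x hyz').ne']
        exact key y hyz'
      · have h1 : T.phi y z ≠ x := by
          intro hc
          by_cases hfix : T.phi y z = z
          · rw [hfix] at hc; exact hz hc
          · have hlt : z < y := T.lt_of_phi_ne y z (inStar_of_adj T hyz) hfix
            have := phi_lt T hlt
            rw [hc] at this
            exact hmax y this
        have h2 : T.phi z y ≠ x := by
          intro hc
          by_cases hfix : T.phi z y = y
          · rw [hfix] at hc; exact hy hc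
          · have hlt : y < z := T.lt_of_phi_ne z y (inStar_of_adj T hyz.symm) hfix
            have := phi_lt T hlt
            rw [hc] at this
            exact hmax z this
        rw [dif_neg hy, dif_neg hz, dif_neg h1, dif_neg h2, ← map_mul, ← map_mul]
        exact congrArg _ (trickleRel (Tlam T hmu x hmax)
          (show (Tlam T hmu x hmax).graph.Adj ⟨y, hy⟩ ⟨z, hz⟩ from hyz))
  let F : TrickleGroup T →* HNNExtension (TrickleGroup (Tlam T hmu x hmax)) A A θ :=
    PresentedGroup.toGroup hFrels
  have hFgen : ∀ v : V, F (gen T v) =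
      if h : v = x then HNNExtension.t
      else HNNExtension.of (gen (Tlam T hmu x hmax) ⟨v, h⟩) :=
    fun v => PresentedGroup.toGroup.of hFrels
  -- the conjugation identity in the trickle group
  have hcomm : (((inclLam T hmu x hmax).comp ι).comp (psiHom T hmu x hmax)) =
      ((MulAut.conj (gen T x)).toMonoidHom.comp ((inclLam T hmu x hmax).comp ι)) := by
    ext v
    show inclLam T hmu x hmax (ι (psiHom T hmu x hmax (gen (TL T hmu x hmax) v))) =
      gen T x * inclLam T hmu x hmax (ι (gen (TL T hmu x hmax) v)) * (gen T x)⁻¹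
    rw [psiHom_gen, iotaHom_gen, iotaHom_gen, inclLam_gen, inclLam_gen]
    have := conjRel T hmax v.2
    rw [← this]
    group
  have hcond : ∀ a : A, gen T x * inclLam T hmu x hmax ↑a =
      inclLam T hmu x hmax ↑(θ a) * gen T x := by
    rintro ⟨val, w, rfl⟩
    have ha : (⟨ι w, ⟨w, rfl⟩⟩ : A) = eA w := Subtype.ext (hcoe w).symm
    rw [ha, hθ, hcoe, hcoe]
    have hc := DFunLike.congr_fun hcomm w
    simp only [MonoidHom.comp_apply, MulEquiv.coe_toMonoidHom, MulAut.conj_apply] at hc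
    rw [hc]
    group
  let Lf : HNNExtension (TrickleGroup (Tlam T hmu x hmax)) A A θ →* TrickleGroup T :=
    HNNExtension.lift (inclLam T hmu x hmax) (gen T x) hcond
  have hLfF : ∀ g, Lf (F g) = g := by
    have hcomp : Lf.comp F = MonoidHom.id _ := by
      ext v
      show Lf (F (gen T v)) = gen T v
      rw [hFgen]
      by_cases h : v = x
      · subst h
        rw [dif_pos rfl]
        exact HNNExtension.lift_t _ _ _
      · rw [dif_neg h]
        rw [show Lf (HNNExtension.of (gen (Tlam T hmu x hmax) ⟨v, h⟩)) =
          inclLam T hmu x hmax (gen (Tlam T hmu x hmax) ⟨v, h⟩) from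
            HNNExtension.lift_of _ _ _ _]
        exact inclLam_gen T hmu x hmax ⟨v, h⟩
    exact fun g => DFunLike.congr_fun hcomp g
  have hFincl : ∀ g, F (inclLam T hmu x hmax g) = HNNExtension.of g := by
    have hcomp : F.comp (inclLam T hmu x hmax) =
        (HNNExtension.of : TrickleGroup (Tlam T hmu x hmax) →*
          HNNExtension (TrickleGroup (Tlam T hmu x hmax)) A A θ) := by
      ext w
      show F (inclLam T hmu x hmax (gen (Tlam T hmu x hmax) w)) =
        HNNExtension.of (gen (Tlam T hmu x hmax) w)
      rw [inclLam_gen, hFgen, dif_neg w.2]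
    exact fun g => DFunLike.congr_fun hcomp g
  constructor
  · -- injectivity of inclLam
    intro g g' hgg
    have h1 : HNNExtension.of (φ := θ) g = HNNExtension.of g' := by
      rw [← hFincl, ← hFincl, hgg]
    exact HNNExtension.of_injective (φ := θ) h1
  · -- torsion-freeness transfer
    intro htf
    have htfHNN := HNNTF.isTorsionFree θ htf
    exact isTorsionFree_of_injective F
      (fun a b hab => by rw [← hLfF a, ← hLfF b, hab]) htfHNN

end Step

end TrickleAux
namespace TrickleAux

open TrickleGraph

variable {V : Type u} [PartialOrder V]

/-- inclusion of the trickle group of a lower set into the full trickle group -/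
def inclHom (T : TrickleGraph V) (hmu : ∀ v : V, T.mu v = ⊤) (Λ : Set V) (hΛ : Lower Λ) :
    TrickleGroup (restrict T hmu hΛ) →* TrickleGroup T :=
  mapHom _ T (restrict_mu T hmu hΛ) Subtype.val (fun h => h) (fun _ => rfl)

theorem inclHom_gen (T : TrickleGraph V) (hmu : ∀ v : V, T.mu v = ⊤) (Λ : Set V)
    (hΛ : Lower Λ) (v : ↥Λ) :
    inclHom T hmu Λ hΛ (gen (restrict T hmu hΛ) v) = gen T v.1 := by
  apply mapHom_gen
  intro y z h
  rfl

theorem inclLam_eq_inclHom (T : TrickleGraph V) (hmu : ∀ v : V, T.mu v = ⊤) (x : V)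
    (hmax : ∀ y : V, ¬ x < y) :
    inclLam T hmu x hmax = inclHom T hmu {y : V | y ≠ x} (lam_lower x hmax) := rfl

/-- the inverse of the inclusion of the restriction to `univ` -/
def univHom (T : TrickleGraph V) (hmu : ∀ v : V, T.mu v = ⊤)
    (hΛ : Lower (Set.univ : Set V)) :
    TrickleGroup T →* TrickleGroup (restrict T hmu hΛ) :=
  mapHom T _ hmu (fun v => ⟨v, Set.mem_univ v⟩) (fun h => h) (fun _ => rfl)

theorem univHom_gen (T : TrickleGraph V) (hmu : ∀ v : V, T.mu v = ⊤)
    (hΛ : Lower (Set.univ : Set V)) (v : V) :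
    univHom T hmu hΛ (gen T v) = gen (restrict T hmu hΛ) ⟨v, Set.mem_univ v⟩ := by
  unfold univHom
  apply mapHom_gen
  intro y z h
  rfl

theorem inclHom_univ_injective (T : TrickleGraph V) (hmu : ∀ v : V, T.mu v = ⊤)
    (hΛ : Lower (Set.univ : Set V)) :
    Function.Injective (inclHom T hmu Set.univ hΛ) := by
  have hcomp : (univHom T hmu hΛ).comp (inclHom T hmu Set.univ hΛ) = MonoidHom.id _ := by
    ext v
    show univHom T hmu hΛ (inclHom T hmu Set.univ hΛ (gen (restrict T hmu hΛ) v)) =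
      gen (restrict T hmu hΛ) v
    rw [inclHom_gen, univHom_gen]
  intro a b hab
  have h2 := congrArg (univHom T hmu hΛ) hab
  rwa [show ∀ g, univHom T hmu hΛ (inclHom T hmu Set.univ hΛ g) = g from
      fun g => DFunLike.congr_fun hcomp g,
    show ∀ g, univHom T hmu hΛ (inclHom T hmu Set.univ hΛ g) = g from
      fun g => DFunLike.congr_fun hcomp g] at h2

section Step

variable (T : TrickleGraph V) (hmu : ∀ v : V, T.mu v = ⊤) (x : V) (hmax : ∀ y : V, ¬ x < y)
variable (Λ : Set V) (hΛ : Lower Λ) (hsub : Λ ⊆ {y : V | y ≠ x})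

/-- `Λ` viewed as a set of vertices of the complement of `x`. -/
def SubS : Set ↥{y : V | y ≠ x} := {w : ↥{y : V | y ≠ x} | w.1 ∈ Λ}

include hΛ in
theorem SubS_lower : Lower (SubS x Λ) := fun a b hab hb => hΛ hab hb

/-- transport between the two presentations of the trickle group of `Λ`. -/
def bridgeHom :
    TrickleGroup (restrict T hmu hΛ) →*
      TrickleGroup (restrict (Tlam T hmu x hmax) (restrict_mu T hmu _)
        (SubS_lower x Λ hΛ)) :=
  mapHom _ _ (restrict_mu T hmu hΛ) (fun v => ⟨⟨v.1, hsub v.2⟩, v.2⟩)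
    (fun h => h) (fun _ => rfl)

def bridgeInv :
    TrickleGroup (restrict (Tlam T hmu x hmax) (restrict_mu T hmu _)
        (SubS_lower x Λ hΛ)) →* TrickleGroup (restrict T hmu hΛ) :=
  mapHom _ _ (restrict_mu (Tlam T hmu x hmax) (restrict_mu T hmu _) (SubS_lower x Λ hΛ))
    (fun w => ⟨w.1.1, w.2⟩) (fun h => h) (fun _ => rfl)

theorem bridgeHom_gen (v : ↥Λ) :
    bridgeHom T hmu x hmax Λ hΛ hsub (gen (restrict T hmu hΛ) v) =
      gen (restrict (Tlam T hmu x hmax) (restrict_mu T hmu _) (SubS_lower x Λ hΛ))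
        ⟨⟨v.1, hsub v.2⟩, v.2⟩ := by
  unfold bridgeHom
  apply mapHom_gen
  intro y z h
  rfl

theorem bridgeInv_gen (w : ↥(SubS x Λ)) :
    bridgeInv T hmu x hmax Λ hΛ (gen _ w) = gen (restrict T hmu hΛ) ⟨w.1.1, w.2⟩ := by
  unfold bridgeInv
  apply mapHom_gen
  intro y z h
  rfl

theorem bridgeHom_injective : Function.Injective (bridgeHom T hmu x hmax Λ hΛ hsub) := by
  have hcomp : (bridgeInv T hmu x hmax Λ hΛ).comp (bridgeHom T hmu x hmax Λ hΛ hsub) =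
      MonoidHom.id _ := by
    ext v
    show bridgeInv T hmu x hmax Λ hΛ (bridgeHom T hmu x hmax Λ hΛ hsub
      (gen (restrict T hmu hΛ) v)) = gen (restrict T hmu hΛ) v
    rw [bridgeHom_gen, bridgeInv_gen]
  intro a b hab
  have := congrArg (bridgeInv T hmu x hmax Λ hΛ) hab
  rwa [show ∀ g, bridgeInv T hmu x hmax Λ hΛ (bridgeHom T hmu x hmax Λ hΛ hsub g) = g from
    fun g => DFunLike.congr_fun hcomp g,
    show ∀ g, bridgeInv T hmu x hmax Λ hΛ (bridgeHom T hmu x hmax Λ hΛ hsub g) = g from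
    fun g => DFunLike.congr_fun hcomp g] at this

theorem incl_factor :
    (inclLam T hmu x hmax).comp
      ((inclHom (Tlam T hmu x hmax) (restrict_mu T hmu _) (SubS x Λ) (SubS_lower x Λ hΛ)).comp
        (bridgeHom T hmu x hmax Λ hΛ hsub)) = inclHom T hmu Λ hΛ := by
  ext v
  show inclLam T hmu x hmax (inclHom (Tlam T hmu x hmax) (restrict_mu T hmu _) (SubS x Λ)
      (SubS_lower x Λ hΛ) (bridgeHom T hmu x hmax Λ hΛ hsub (gen (restrict T hmu hΛ) v))) =
    inclHom T hmu Λ hΛ (gen (restrict T hmu hΛ) v)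
  rw [bridgeHom_gen, inclHom_gen, inclLam_gen, inclHom_gen]

theorem iota_factor :
    (inclHom (Tlam T hmu x hmax) (restrict_mu T hmu _) (SubS x {y : V | T.graph.Adj x y})
        (SubS_lower x _ (link_lower T x hmax))).comp
      (bridgeHom T hmu x hmax {y : V | T.graph.Adj x y} (link_lower T x hmax)
        (link_sub T x)) = iotaHom T hmu x hmax := by
  ext v
  show inclHom (Tlam T hmu x hmax) (restrict_mu T hmu _) (SubS x {y : V | T.graph.Adj x y})
      (SubS_lower x _ (link_lower T x hmax))
      (bridgeHom T hmu x hmax {y : V | T.graph.Adj x y} (link_lower T x hmax) (link_sub T x)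
        (gen (restrict T hmu (link_lower T x hmax)) v)) =
      iotaHom T hmu x hmax (gen (TL T hmu x hmax) v)
  rw [bridgeHom_gen, inclHom_gen, iotaHom_gen]

end Step

theorem exists_max [Finite V] (v : V) : ∃ x : V, v ≤ x ∧ ∀ y : V, ¬ x < y := by
  obtain ⟨x, hx, hmax⟩ := Set.Finite.exists_maximalFor id {y : V | v ≤ y}
    (Set.toFinite _) ⟨v, le_refl v⟩
  exact ⟨x, hx, fun y hlt => hlt.not_ge (hmax (le_trans hx hlt.le) hlt.le)⟩

theorem card_lam_lt [Finite V] (x : V) : Nat.card ↥{y : V | y ≠ x} < Nat.card V := by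
  rw [Nat.card_coe_set_eq, ← Set.ncard_univ]
  apply Set.ncard_lt_ncard ?_ Set.finite_univ
  rw [Set.ssubset_univ_iff]
  intro h
  have : x ∈ {y : V | y ≠ x} := by rw [h]; trivial
  exact this rfl

/-- The main induction. -/
theorem main (n : ℕ) : ∀ {V : Type u} [PartialOrder V] [Finite V] (T : TrickleGraph V)
    (hmu : ∀ v : V, T.mu v = ⊤), Nat.card V ≤ n →
    Monoid.IsTorsionFree (TrickleGroup T) ∧
    ∀ (Λ : Set V) (hΛ : Lower Λ), Function.Injective (inclHom T hmu Λ hΛ) := by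
  induction n with
  | zero =>
    intro V _ _ T hmu hcard
    have hemp : IsEmpty V := by
      rcases Nat.card_eq_zero.1 (Nat.le_zero.1 hcard) with h | h
      · exact h
      · exact absurd h (not_infinite_iff_finite.2 ‹_›)
    constructor
    · intro g hg _
      exact absurd (subsingleton_of_isEmpty T g) hg
    · intro Λ hΛ a b _
      have : IsEmpty ↥Λ := ⟨fun w => hemp.elim w.1⟩
      rw [subsingleton_of_isEmpty _ a, subsingleton_of_isEmpty _ b]
  | succ n ih =>
    intro V _ _ T hmu hcard
    -- for each maximal vertex, the HNN step applies
    have hxstep : ∀ (x : V) (hmax : ∀ y : V, ¬ x < y),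
        Function.Injective (inclLam T hmu x hmax) ∧
          (Monoid.IsTorsionFree (TrickleGroup (Tlam T hmu x hmax)) →
            Monoid.IsTorsionFree (TrickleGroup T)) := by
      intro x hmax
      have hcard' : Nat.card ↥{y : V | y ≠ x} ≤ n := by
        have := card_lam_lt (V := V) x
        omega
      have hIH := ih (Tlam T hmu x hmax) (restrict_mu T hmu _) hcard'
      have hiota : Function.Injective (iotaHom T hmu x hmax) := by
        rw [← iota_factor T hmu x hmax, MonoidHom.coe_comp]
        exact Function.Injective.comp
          (hIH.2 (SubS x {y : V | T.graph.Adj x y}) (SubS_lower x _ (link_lower T x hmax)))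
          (bridgeHom_injective T hmu x hmax {y : V | T.graph.Adj x y}
            (link_lower T x hmax) (link_sub T x))
      exact hnn_step T hmu x hmax hiota
    have htf : Monoid.IsTorsionFree (TrickleGroup T) := by
      rcases isEmpty_or_nonempty V with hV | hV
      · intro g hg _
        exact absurd (subsingleton_of_isEmpty T g) hg
      · obtain ⟨v⟩ := hV
        obtain ⟨x, _, hmax⟩ := exists_max v
        have hcard' : Nat.card ↥{y : V | y ≠ x} ≤ n := by
          have := card_lam_lt (V := V) x
          omega
        exact (hxstep x hmax).2
          (ih (Tlam T hmu x hmax) (restrict_mu T hmu _) hcard').1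
    refine ⟨htf, ?_⟩
    intro Λ hΛ
    by_cases hU : Λ = Set.univ
    · subst hU
      exact inclHom_univ_injective T hmu hΛ
    · obtain ⟨v, hv⟩ : ∃ v : V, v ∉ Λ := by
        by_contra hc
        push_neg at hc
        exact hU (Set.eq_univ_of_forall hc)
      obtain ⟨x, hvx, hmax⟩ := exists_max v
      have hxΛ : x ∉ Λ := fun hx => hv (hΛ hvx hx)
      have hsub : Λ ⊆ {y : V | y ≠ x} := fun y hy => fun hyx => hxΛ (hyx ▸ hy)
      have hcard' : Nat.card ↥{y : V | y ≠ x} ≤ n := by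
        have := card_lam_lt (V := V) x
        omega
      have hIH := ih (Tlam T hmu x hmax) (restrict_mu T hmu _) hcard'
      rw [← incl_factor T hmu x hmax Λ hΛ hsub, MonoidHom.coe_comp, MonoidHom.coe_comp]
      exact Function.Injective.comp (hxstep x hmax).1 (Function.Injective.comp
        (hIH.2 (SubS x Λ) (SubS_lower x Λ hΛ))
        (bridgeHom_injective T hmu x hmax Λ hΛ hsub))

end TrickleAux
/-- **Theorem 2.16.** If `Γ` is a preGarside trickle graph (i.e. `mu x = ∞` for every vertex)
with finitely many vertices, then the trickle group `Tr(Γ)` is torsion-free. -/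
theorem TrickleGroup.isTorsionFree {V : Type u} [PartialOrder V] [Finite V]
    (T : TrickleGraph V) (hmu : ∀ x : V, T.mu x = ⊤) :
    Monoid.IsTorsionFree (TrickleGroup T) :=
  (TrickleAux.main (Nat.card V) T hmu le_rfl).1
end

section
/- Let (Q, *, ≤) be an ordered quandle. Let Γ be the complete graph on Q, let μ(x) = ∞ for all x ∈ Q, and for each x ∈ Q define φ_x : Q → Q by φ_x(y) = y if x ≤ y and φ_x(y) = y * x if y ≤ x. Then the quadruple (Γ, ≤, μ, (φ_x)_{x∈Q}) is a trickle graph. -/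
open scoped Classical

universe u

/-- **Proposition 3.17.** Let `(Q, *, ≤)` be an ordered quandle (axioms (1)–(3) of a quandle,
together with a total order such that `y ≤ z ↔ y * x ≤ z * x`). Let `Γ` be the complete graph
on `Q`, let `μ(x) = ∞` for all `x`, and let `φ_x(y) = y` if `x ≤ y` and `φ_x(y) = y * x` if
`y ≤ x`. Then `(Γ, ≤, μ, (φ_x))` is a trickle graph. -/
theorem orderedQuandle_trickleGraph {Q : Type u} [LinearOrder Q] (op : Q → Q → Q)
    (h1 : ∀ x : Q, op x x = x)
    (h2 : ∀ x y z : Q, op (op z x) (op y x) = op (op z y) x)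
    (h3 : ∀ x : Q, Function.Bijective (fun y : Q => op y x))
    (hord : ∀ x y z : Q, y ≤ z ↔ op y x ≤ op z x) :
    ∃ T : TrickleGraph Q,
      (∀ a b : Q, T.graph.Adj a b ↔ a ≠ b) ∧
      (∀ x : Q, T.mu x = ⊤) ∧
      (∀ x y : Q, (x ≤ y → T.phi x y = y) ∧ (y ≤ x → T.phi x y = op y x)) := by
  classical
  -- op · x is strictly monotone
  have hsm : ∀ x : Q, StrictMono (fun y : Q => op y x) := by
    intro x y z hyz
    exact lt_of_le_not_ge ((hord x y z).1 hyz.le) fun h => hyz.not_ge ((hord x z y).2 h)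
  set f : Q → Q → Q := fun x y => if x ≤ y then y else op y x with hf
  have hlt : ∀ x y : Q, ¬ x ≤ y → op y x < x := by
    intro x y hxy
    have := hsm x (lt_of_not_ge hxy)
    simpa [h1] using this
  have hfsm : ∀ x : Q, StrictMono (f x) := by
    intro x y z hyz
    by_cases hy : x ≤ y <;> by_cases hz : x ≤ z <;>
      simp only [hf, if_pos, if_neg, hy, hz, if_true, if_false]
    · exact hyz
    · exact absurd (lt_of_lt_of_le (lt_of_not_ge hz) hy) (not_lt.2 hyz.le)
    · exact lt_of_lt_of_le (hlt x y hy) hz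
    · exact hsm x hyz
  have hfsurj : ∀ x : Q, Function.Surjective (f x) := by
    intro x z
    by_cases hz : x ≤ z
    · exact ⟨z, if_pos hz⟩
    · obtain ⟨w, hw⟩ := (h3 x).2 z
      have hw' : op w x = z := hw
      have hwx : ¬ x ≤ w := by
        intro h
        exact hz (by rw [← hw']; simpa [h1] using (hord x x w).1 h)
      exact ⟨w, by simp [hf, hwx, hw']⟩
  let e : Q → Equiv.Perm Q := fun x => Equiv.ofBijective (f x) ⟨(hfsm x).injective, hfsurj x⟩
  have he : ∀ x y : Q, e x y = f x y := fun _ _ => rfl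
  have hstar : ∀ x y : Q, (⊤ : SimpleGraph Q).InStar x y := by
    intro x y
    by_cases h : y = x
    · exact Or.inl h
    · exact Or.inr (by simpa using Ne.symm h)
  refine ⟨{ graph := ⊤
            mu := fun _ => ⊤
            phi := e
            two_le_mu := fun _ => le_top
            adj_of_lt := fun x y h => by simpa using h.ne
            phi_apply_of_not_inStar := fun x y h => absurd (hstar x y) h
            inStar_phi := fun x y _ => hstar x _
            adj_phi_iff := fun x y z _ _ => by
              simp only [SimpleGraph.top_adj]
              exact not_congr (Equiv.apply_eq_iff_eq _)
            adj_incomp := fun x y z _ hxy hyx _ =>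
              absurd (le_total x y) (by tauto)
            le_phi_iff := fun x y z _ _ => (hfsm x).le_iff_le
            lt_of_phi_ne := fun x y _ h => by
              by_contra hc
              exact h (show f x y = y from if_pos (le_of_not_gt hc))
            phi_pow_mu := fun x => by rw [show WithTop.untopD 0 (⊤ : ℕ∞) = 0 from rfl, pow_zero]
            mu_phi := fun _ _ _ => rfl
            phi_phi := ?_ }, ?_, ?_, ?_⟩
  · intro x y z hzy hyx
    have hyz : ¬ y ≤ z := not_le.2 hzy
    have hxy : ¬ x ≤ y := not_le.2 hyx
    have hxz : ¬ x ≤ z := not_le.2 (hzy.trans hyx)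
    have h5 : ¬ x ≤ op z y := not_le.2 ((hlt y z hyz).trans hyx)
    have h6 : ¬ op y x ≤ op z x := not_le.2 (hsm x hzy)
    show f x (f y z) = f (f x y) (f x z)
    simp only [hf, if_neg hyz, if_neg hxy, if_neg hxz, if_neg h5, if_neg h6]
    exact (h2 x y z).symm
  · intro a b; simp
  · intro x; rfl
  · intro x y
    constructor
    · intro h; exact if_pos h
    · intro h
      by_cases hxy : x ≤ y
      · have hyx : y = x := le_antisymm h hxy
        subst hyx
        rw [h1]; exact if_pos le_rfl
      · exact if_neg hxy
end
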